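/- Fix an integer n ≥ 1. Let ψ : ℝ → ℝ be (n−1)-times continuously differentiable such that for every θ ∈ ℤ the restriction of ψ to [θ/2, (θ+1)/2] coincides with a polynomial of degree at most n, with leading coefficient A_θ, and assume |ψ^{(α)}(x)| ≤ C e^{−γ|x|} for all x ∈ ℝ and all 0 ≤ α ≤ n−1, where C, γ > 0. Assume Ã := A_1 − A_0 ≠ 0. Let η : ℝ → ℝ be integrable, vanishing outside (−2^{−5}, 2^{−5}), with ∫_ℝ y^M η(y) dy = 0 for 0 ≤ M ≤ n+2, and with y ↦ y^n η(y) odd. Then there exists an integer K_0* ≥ 1 (depending only on n, C, γ and Ã) such that for every integer K_0 ≥ K_0*, every s ∈ ℝ, every q ∈ (1,∞), every k, N ∈ ℕ, and every μ ∈ {0, 1, …, 2^k − 1}: (|Ã|/2) 2^{N(−s+1/q−n−1)} |∫_0^{1/2} y^n η(y) dy| ≤ |2^k ⟨Υ_k, ψ_{k,K_0μ}⟩| ≤ 2 |Ã| 2^{N(−s+1/q−n−1)} |∫_0^{1/2} y^n η(y) dy|, where Υ_k(y) = 2^{N(−s+1/q)} Σ_{μ'=0}^{2^k−1} η(2^{k+N}(y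 − 2^{−k} K_0 μ' − 2^{−k−1})), ψ_{k,m}(y) = ψ(2^k y − m), and ⟨f,g⟩ = ∫_ℝ f(y) g(y) dy. -/

import Mathlib

open MeasureTheory Set Finset Real

section Helpers
open Polynomial

lemma poly_iterderiv (j : ℕ) (P : ℝ[X]) :
    iteratedDeriv j (fun x => P.eval x) = fun x => (Polynomial.derivative^[j] P).eval x := by
  induction j generalizing P with
  | zero => simp
  | succ j ih =>
    rw [iteratedDeriv_succ']
    have : (deriv fun x => P.eval x) = fun x => P.derivative.eval x := by
      funext x; exact Polynomial.deriv (p := P)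
    rw [this, ih, Function.iterate_succ_apply]

lemma bridge (m : ℕ) (ψ : ℝ → ℝ) (hs : ContDiff ℝ (m : ℕ) ψ) (P : ℝ[X]) (a b : ℝ) (hab : a < b)
    (heq : ∀ x ∈ Set.Icc a b, ψ x = P.eval x) (j : ℕ) (hj : j ≤ m) :
    ∀ x ∈ Set.Icc a b, iteratedDeriv j ψ x = (Polynomial.derivative^[j] P).eval x := by
  have hIoo : Set.EqOn (iteratedDeriv j ψ) (fun x => (Polynomial.derivative^[j] P).eval x)
      (Set.Ioo a b) := by
    intro x hx
    have hev : ψ =ᶠ[nhds x] fun y => P.eval y := by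
      filter_upwards [isOpen_Ioo.mem_nhds hx] with y hy
      exact heq y (Set.Ioo_subset_Icc_self hy)
    rw [hev.iteratedDeriv_eq j, poly_iterderiv]
  have hc1 : Continuous (iteratedDeriv j ψ) :=
    hs.continuous_iteratedDeriv j (by exact_mod_cast Nat.cast_le.mpr hj)
  have hc2 : Continuous fun x => (Polynomial.derivative^[j] P).eval x :=
    (Polynomial.derivative^[j] P).continuous
  have := hIoo.closure hc1 hc2
  rwa [closure_Ioo hab.ne] at this

lemma taylor_aux (n : ℕ) (Q : ℝ[X]) (x₀ : ℝ) (hdeg : Q.natDegree ≤ n)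
    (hvan : ∀ j < n, (Polynomial.derivative^[j] Q).eval x₀ = 0) :
    ∀ x : ℝ, Q.eval x = Q.coeff n * (x - x₀) ^ n := by
  set T := Polynomial.taylor x₀ Q with hT
  have hTdeg : T.natDegree ≤ n := by rw [hT, natDegree_taylor]; exact hdeg
  have hcoeffn : T.coeff n = Q.coeff n := by
    rw [hT, taylor_coeff]
    have : hasseDeriv n Q = C (Q.coeff n) := by
      ext j
      rw [hasseDeriv_coeff]
      cases j with
      | zero => simp
      | succ i =>
        rw [coeff_eq_zero_of_natDegree_lt (by omega : Q.natDegree < i + 1 + n)]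
        simp
    rw [this, eval_C]
  have hcoefflt : ∀ i < n, T.coeff i = 0 := by
    intro i hi
    rw [hT, taylor_coeff]
    have h1 : (i.factorial : ℝ) * (hasseDeriv i Q).eval x₀
        = (Polynomial.derivative^[i] Q).eval x₀ := by
      have := Polynomial.factorial_smul_hasseDeriv (R := ℝ) i
      have h2 : (i.factorial • hasseDeriv i Q : ℝ[X]) = Polynomial.derivative^[i] Q := by
        rw [← this]; rfl
      calc (i.factorial : ℝ) * (hasseDeriv i Q).eval x₀
          = ((i.factorial • hasseDeriv i Q : ℝ[X])).eval x₀ := by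
            rw [nsmul_eq_mul]; simp
        _ = _ := by rw [h2]
    have h3 := hvan i hi
    rcases mul_eq_zero.mp (h1.trans h3) with h | h
    · exact absurd (Nat.cast_eq_zero.mp h) (Nat.factorial_ne_zero i)
    · exact h
  intro x
  have heval : Q.eval x = T.eval (x - x₀) := by
    rw [hT, taylor_eval_sub]
  rw [heval, eval_eq_sum_range' (lt_of_le_of_lt hTdeg (Nat.lt_succ_self n))]
  rw [Finset.sum_eq_single n]
  · rw [hcoeffn]
  · intro i hi hne
    rw [hcoefflt i (by simp only [Finset.mem_range] at hi; omega), zero_mul]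
  · intro h
    exact absurd (Finset.mem_range.mpr (Nat.lt_succ_self n)) h

lemma geom_aux {r : ℝ} (h0 : 0 ≤ r) (h1 : r < 1) (M : ℕ) :
    ∑ i ∈ Finset.range M, r ^ i ≤ (1 - r)⁻¹ := by
  have h2 : 0 < 1 - r := by linarith
  have h3 : ∑ i ∈ Finset.range M, r ^ i = (1 - r ^ M) / (1 - r) := by
    rw [geom_sum_eq h1.ne M]
    rw [div_eq_div_iff (by linarith) h2.ne']
    ring
  rw [h3, div_le_iff₀ h2, inv_mul_cancel₀ h2.ne']
  have : 0 ≤ r ^ M := pow_nonneg h0 M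
  linarith

lemma erase_sum_aux {r : ℝ} (h0 : 0 ≤ r) (h1 : r < 1) (Bc : ℝ) (hBc : 0 ≤ Bc)
    (M μ : ℕ) (hμ : μ < M) (f : ℕ → ℝ)
    (hf : ∀ μ' ∈ (Finset.range M).erase μ, |f μ'| ≤ Bc * r ^ (((μ' : ℤ) - μ).natAbs)) :
    |∑ μ' ∈ (Finset.range M).erase μ, f μ'| ≤ Bc * (2 * (r * (1 - r)⁻¹)) := by
  have h2 : 0 < 1 - r := by linarith
  calc |∑ μ' ∈ (Finset.range M).erase μ, f μ'|
      ≤ ∑ μ' ∈ (Finset.range M).erase μ, |f μ'| := Finset.abs_sum_le_sum_abs _ _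
    _ ≤ ∑ μ' ∈ (Finset.range M).erase μ, Bc * r ^ (((μ' : ℤ) - μ).natAbs) :=
        Finset.sum_le_sum hf
    _ = Bc * ∑ μ' ∈ (Finset.range M).erase μ, r ^ (((μ' : ℤ) - μ).natAbs) := by
        rw [Finset.mul_sum]
    _ ≤ Bc * (2 * (r * (1 - r)⁻¹)) := by
        refine mul_le_mul_of_nonneg_left ?_ hBc
        have hsplit : (Finset.range M).erase μ = Finset.range μ ∪ Finset.Ico (μ+1) M := by
          ext x
          simp only [Finset.mem_erase, Finset.mem_range, Finset.mem_union, Finset.mem_Ico]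
          omega
        rw [hsplit, Finset.sum_union (by
          simp only [Finset.disjoint_left, Finset.mem_range, Finset.mem_Ico]
          omega)]
        have hA : ∑ μ' ∈ Finset.range μ, r ^ (((μ' : ℤ) - μ).natAbs) ≤ r * (1 - r)⁻¹ := by
          have : ∀ μ' ∈ Finset.range μ, r ^ (((μ' : ℤ) - μ).natAbs) = r ^ (μ - μ') := by
            intro μ' h; rw [Finset.mem_range] at h
            congr 1; omega
          rw [Finset.sum_congr rfl this, ← Finset.sum_range_reflect]
          have : ∀ j ∈ Finset.range μ, r ^ (μ - (μ - 1 - j)) = r * r ^ j := by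
            intro j hj; rw [Finset.mem_range] at hj
            rw [← pow_succ']
            congr 1; omega
          rw [Finset.sum_congr rfl this, ← Finset.mul_sum]
          exact mul_le_mul_of_nonneg_left (geom_aux h0 h1 μ) h0
        have hB : ∑ μ' ∈ Finset.Ico (μ+1) M, r ^ (((μ' : ℤ) - μ).natAbs) ≤ r * (1 - r)⁻¹ := by
          rw [Finset.sum_Ico_eq_sum_range]
          have : ∀ j ∈ Finset.range (M - (μ+1)),
              r ^ (((((μ+1+j : ℕ)) : ℤ) - μ).natAbs) = r * r ^ j := by
            intro j hj
            rw [← pow_succ']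
            congr 1
            push_cast
            omega
          rw [Finset.sum_congr rfl this, ← Finset.mul_sum]
          exact mul_le_mul_of_nonneg_left (geom_aux h0 h1 _) h0
        linarith

lemma int_eta_cont {η : ℝ → ℝ} (hη : Integrable η)
    (hηsupp : ∀ y : ℝ, y ∉ Set.Ioo (-(2 : ℝ) ^ (-5 : ℤ)) ((2 : ℝ) ^ (-5 : ℤ)) → η y = 0)
    (g : ℝ → ℝ) (hg : Continuous g) : Integrable (fun u => η u * g u) := by
  obtain ⟨M, hM⟩ : ∃ M : ℝ, ∀ u ∈ Set.Icc (-1 : ℝ) 1, |g u| ≤ M := by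
    obtain ⟨M, hM⟩ := (isCompact_Icc (a := (-1:ℝ)) (b := 1)).exists_bound_of_continuousOn
      hg.continuousOn
    exact ⟨M, fun u hu => by simpa using hM u hu⟩
  have hM0 : 0 ≤ M := le_trans (abs_nonneg _) (hM 0 (by norm_num))
  refine Integrable.mono' (hη.norm.const_mul M) ?_ ?_
  · exact (hη.1.mul (hg.aestronglyMeasurable))
  · filter_upwards with u
    by_cases hu : u ∈ Set.Icc (-1 : ℝ) 1
    · calc ‖η u * g u‖ = |η u| * |g u| := abs_mul _ _
        _ ≤ |η u| * M := mul_le_mul_of_nonneg_left (hM u hu) (abs_nonneg _)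
        _ = M * ‖η u‖ := by rw [mul_comm]; rfl
    · have : η u = 0 := by
        apply hηsupp
        intro h
        rcases h with ⟨h1, h2⟩
        simp only [Set.mem_Icc, not_and_or, not_le] at hu
        have h5 : (2:ℝ) ^ (-5 : ℤ) ≤ 1 := by norm_num
        rcases hu with h | h <;> nlinarith
      simp [this]

lemma int_eta_poly {η : ℝ → ℝ} (hη : Integrable η)
    (hηsupp : ∀ y : ℝ, y ∉ Set.Ioo (-(2 : ℝ) ^ (-5 : ℤ)) ((2 : ℝ) ^ (-5 : ℤ)) → η y = 0)
    (Q : ℝ[X]) : Integrable (fun u => η u * Q.eval u) :=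
  int_eta_cont hη hηsupp _ Q.continuous

lemma int_pow_eta {η : ℝ → ℝ} (hη : Integrable η)
    (hηsupp : ∀ y : ℝ, y ∉ Set.Ioo (-(2 : ℝ) ^ (-5 : ℤ)) ((2 : ℝ) ^ (-5 : ℤ)) → η y = 0)
    (j : ℕ) : Integrable (fun u : ℝ => u ^ j * η u) := by
  have := int_eta_poly hη hηsupp (X ^ j)
  simpa [mul_comm] using this

lemma mom_poly {η : ℝ → ℝ} (hη : Integrable η)
    (hηsupp : ∀ y : ℝ, y ∉ Set.Ioo (-(2 : ℝ) ^ (-5 : ℤ)) ((2 : ℝ) ^ (-5 : ℤ)) → η y = 0)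
    (n : ℕ) (hηmom : ∀ M : ℕ, M ≤ n + 2 → ∫ y : ℝ, y ^ M * η y = 0)
    (Q : ℝ[X]) (hdeg : Q.natDegree ≤ n + 2) : ∫ u : ℝ, η u * Q.eval u = 0 := by
  have hrw : ∀ u : ℝ, η u * Q.eval u = ∑ j ∈ Finset.range (n + 3), Q.coeff j * (u ^ j * η u) := by
    intro u
    rw [eval_eq_sum_range' (lt_of_le_of_lt hdeg (Nat.lt_succ_self _))]
    rw [Finset.mul_sum]
    refine Finset.sum_congr rfl fun j _ => by ring
  simp_rw [hrw]
  rw [integral_finset_sum]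
  · refine Finset.sum_eq_zero fun j hj => ?_
    rw [MeasureTheory.integral_const_mul, hηmom j (by simp only [Finset.mem_range] at hj; omega),
      mul_zero]
  · intro j _
    exact (int_pow_eta hη hηsupp j).const_mul _

lemma eta_shift_int {η : ℝ → ℝ} (hη : Integrable η) (e : ℝ) :
    Integrable (fun x : ℝ => η (x + e)) := by
  have h := (measurePreserving_add_right (volume : Measure ℝ) e).integrable_comp
    hη.aestronglyMeasurable
  exact h.mpr hη

lemma eta_affine_int {η : ℝ → ℝ} (hη : Integrable η) (b e : ℝ) (hb : b ≠ 0) :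
    Integrable (fun x : ℝ => η (b * x + e)) :=
  (eta_shift_int hη e).comp_mul_left' hb

lemma subst_aux (F : ℝ → ℝ) (b e : ℝ) (hb : 0 < b) :
    ∫ y : ℝ, F (b * y + e) = b⁻¹ * ∫ u : ℝ, F u := by
  have h1 : (fun y : ℝ => F (b * y + e)) = fun y => (fun x => F (x + e)) (b * y) := rfl
  rw [h1, MeasureTheory.Measure.integral_comp_mul_left (fun x => F (x + e)) b,
    integral_add_right_eq_self]
  rw [smul_eq_mul, abs_of_pos (by positivity)]

lemma Jeq {η : ℝ → ℝ} (hη : Integrable η)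
    (hηsupp : ∀ y : ℝ, y ∉ Set.Ioo (-(2 : ℝ) ^ (-5 : ℤ)) ((2 : ℝ) ^ (-5 : ℤ)) → η y = 0)
    (n : ℕ) (hint : Integrable (fun u : ℝ => u ^ n * η u)) :
    ∫ u in Set.Ioi (0:ℝ), u ^ n * η u = ∫ y in (0:ℝ)..(1/2), y ^ n * η y := by
  rw [intervalIntegral.integral_of_le (by norm_num : (0:ℝ) ≤ 1/2)]
  have hset : Set.Ioi (0:ℝ) = Set.Ioc (0:ℝ) (1/2) ∪ Set.Ioi (1/2:ℝ) :=
    (Set.Ioc_union_Ioi_eq_Ioi (by norm_num)).symm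
  rw [hset, MeasureTheory.setIntegral_union]
  · have h0 : ∫ x in Set.Ioi (1/2:ℝ), x ^ n * η x = 0 := by
      refine MeasureTheory.setIntegral_eq_zero_of_forall_eq_zero fun x hx => ?_
      have hx0 : η x = 0 := by
        apply hηsupp
        rintro ⟨h1, h2⟩
        rw [show ((2:ℝ) ^ (-5:ℤ)) = 1/32 by norm_num] at h2
        simp only [Set.mem_Ioi] at hx
        linarith
      rw [hx0, mul_zero]
    rw [h0, add_zero]
  · exact Set.Ioc_disjoint_Ioi le_rfl
  · exact measurableSet_Ioi
  · exact hint.integrableOn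
  · exact hint.integrableOn

lemma core_identity (n : ℕ) (hn : 1 ≤ n) (ψ : ℝ → ℝ)
    (hsmooth : ContDiff ℝ (n - 1 : ℕ) ψ)
    (A : ℤ → ℝ)
    (hpoly : ∀ θ : ℤ, ∃ c : ℕ → ℝ, c n = A θ ∧
      ∀ x ∈ Set.Icc ((θ : ℝ) / 2) (((θ : ℝ) + 1) / 2),
        ψ x = ∑ j ∈ Finset.range (n + 1), c j * x ^ j)
    (η : ℝ → ℝ) (hη : Integrable η)
    (hηsupp : ∀ y : ℝ, y ∉ Set.Ioo (-(2 : ℝ) ^ (-5 : ℤ)) ((2 : ℝ) ^ (-5 : ℤ)) → η y = 0)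
    (hηmom : ∀ M : ℕ, M ≤ n + 2 → ∫ y : ℝ, y ^ M * η y = 0)
    (m : ℤ) (c : ℝ) (hc0 : 0 < c) (hc1 : c ≤ 1) :
    ∫ u : ℝ, η u * ψ (c * u + ((m : ℝ) + 1/2))
      = (A (2*m+1) - A (2*m)) * c ^ n * ∫ u in Set.Ioi (0:ℝ), u ^ n * η u := by
  obtain ⟨cm, hcmn, hcm⟩ := hpoly (2*m)
  obtain ⟨cp, hcpn, hcp⟩ := hpoly (2*m+1)
  set x₀ : ℝ := (m : ℝ) + 1/2 with hx₀
  set Pm : ℝ[X] := ∑ j ∈ Finset.range (n+1), C (cm j) * X ^ j with hPm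
  set Pp : ℝ[X] := ∑ j ∈ Finset.range (n+1), C (cp j) * X ^ j with hPp
  have heval : ∀ (d : ℕ → ℝ) (x : ℝ),
      (∑ j ∈ Finset.range (n+1), C (d j) * X ^ j : ℝ[X]).eval x
        = ∑ j ∈ Finset.range (n+1), d j * x ^ j := by
    intro d x; simp [eval_finset_sum]
  have hdeg : ∀ d : ℕ → ℝ, (∑ j ∈ Finset.range (n+1), C (d j) * X ^ j : ℝ[X]).natDegree ≤ n := by
    intro d
    refine Polynomial.natDegree_sum_le_of_forall_le _ _ fun j hj => ?_
    refine (Polynomial.natDegree_C_mul_le _ _).trans ?_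
    simpa using Finset.mem_range_succ_iff.mp hj
  have hcoeffn : ∀ d : ℕ → ℝ,
      (∑ j ∈ Finset.range (n+1), C (d j) * X ^ j : ℝ[X]).coeff n = d n := by
    intro d
    rw [Polynomial.finset_sum_coeff]
    simp only [Polynomial.coeff_C_mul, Polynomial.coeff_X_pow]
    rw [Finset.sum_eq_single n]
    · simp
    · intro b _ hbn
      simp [Ne.symm hbn]
    · intro h
      exact absurd (Finset.mem_range_succ_iff.mpr le_rfl) h
  have hIm : Set.Icc (((2*m : ℤ) : ℝ) / 2) ((((2*m : ℤ) : ℝ) + 1) / 2)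
      = Set.Icc ((m:ℝ)) x₀ := by
    rw [hx₀]; push_cast; ring_nf
  have hIp : Set.Icc (((2*m+1 : ℤ) : ℝ) / 2) ((((2*m+1 : ℤ) : ℝ) + 1) / 2)
      = Set.Icc x₀ ((m:ℝ) + 1) := by
    rw [hx₀]; push_cast; ring_nf
  have hPm_eval : ∀ x ∈ Set.Icc ((m:ℝ)) x₀, ψ x = Pm.eval x := by
    intro x hx
    rw [hPm, heval]
    exact hcm x (by rwa [hIm])
  have hPp_eval : ∀ x ∈ Set.Icc x₀ ((m:ℝ) + 1), ψ x = Pp.eval x := by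
    intro x hx
    rw [hPp, heval]
    exact hcp x (by rwa [hIp])
  have hmx : (m : ℝ) < x₀ := by rw [hx₀]; linarith
  have hx1 : x₀ < (m : ℝ) + 1 := by rw [hx₀]; linarith
  set Q : ℝ[X] := Pp - Pm with hQdef
  have hQdeg : Q.natDegree ≤ n :=
    (Polynomial.natDegree_sub_le _ _).trans (max_le (hdeg cp) (hdeg cm))
  have hQcoeff : Q.coeff n = A (2*m+1) - A (2*m) := by
    rw [hQdef, Polynomial.coeff_sub, hPp, hPm, hcoeffn, hcoeffn, hcpn, hcmn]
  have hvan : ∀ j < n, (Polynomial.derivative^[j] Q).eval x₀ = 0 := by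
    intro j hj
    have hj' : j ≤ n - 1 := by omega
    have h1 := bridge (n-1) ψ hsmooth Pm (m:ℝ) x₀ hmx hPm_eval j hj' x₀
      (Set.right_mem_Icc.mpr hmx.le)
    have h2 := bridge (n-1) ψ hsmooth Pp x₀ ((m:ℝ)+1) hx1 hPp_eval j hj' x₀
      (Set.left_mem_Icc.mpr hx1.le)
    rw [hQdef, Polynomial.iterate_derivative_sub, Polynomial.eval_sub, ← h1, ← h2, sub_self]
  have hQ : ∀ x : ℝ, Q.eval x = (A (2*m+1) - A (2*m)) * (x - x₀) ^ n := by
    intro x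
    rw [taylor_aux n Q x₀ hQdeg hvan x, hQcoeff]
  set Atil : ℝ := A (2*m+1) - A (2*m) with hAtil
  have hpt : ∀ u : ℝ, η u * ψ (c * u + x₀)
      = η u * Pm.eval (c * u + x₀)
        + Set.indicator (Set.Ioi (0:ℝ)) (fun u => η u * (Atil * c ^ n * u ^ n)) u := by
    intro u
    by_cases hu : u ∈ Set.Ioo (-(2 : ℝ) ^ (-5 : ℤ)) ((2 : ℝ) ^ (-5 : ℤ))
    · obtain ⟨hu1, hu2⟩ := hu
      rw [show (-(2:ℝ)^(-5:ℤ)) = -(1/32) by norm_num] at hu1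
      rw [show ((2:ℝ)^(-5:ℤ)) = 1/32 by norm_num] at hu2
      by_cases hu0 : 0 < u
      · have hcu1 : 0 < c * u := mul_pos hc0 hu0
        have hcu2 : c * u ≤ 1/2 := by
          have h1 : c * u ≤ 1 * u := mul_le_mul_of_nonneg_right hc1 hu0.le
          rw [one_mul] at h1
          linarith
        have hx : c * u + x₀ ∈ Set.Icc x₀ ((m:ℝ)+1) := by
          constructor
          · linarith
          · rw [hx₀]; linarith
        rw [hPp_eval _ hx]
        have : Pp = Q + Pm := by rw [hQdef]; ring
        rw [this, Polynomial.eval_add, hQ]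
        rw [Set.indicator_of_mem (Set.mem_Ioi.mpr hu0)]
        have : (c * u + x₀ - x₀) = c * u := by ring
        rw [this, mul_pow]
        ring
      · push_neg at hu0
        have hcu1 : -(1/2) ≤ c * u := by
          have h1 : c * (-u) ≤ 1 * (-u) := mul_le_mul_of_nonneg_right hc1 (by linarith)
          rw [one_mul] at h1
          linarith
        have hcu2 : c * u ≤ 0 := mul_nonpos_of_nonneg_of_nonpos hc0.le hu0
        have hx : c * u + x₀ ∈ Set.Icc ((m:ℝ)) x₀ := by
          constructor
          · rw [hx₀]; linarith
          · linarith
        rw [hPm_eval _ hx, Set.indicator_of_notMem (by simpa using hu0)]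
        ring
    · have hη0 : η u = 0 := hηsupp u hu
      rw [hη0]
      simp [Set.indicator_apply, hη0]
  have hint1 : Integrable (fun u => η u * Pm.eval (c * u + x₀)) := by
    have := int_eta_poly hη hηsupp (Pm.comp (C c * X + C x₀))
    simpa [Polynomial.eval_comp] using this
  have hint2 : Integrable (Set.indicator (Set.Ioi (0:ℝ)) fun u => η u * (Atil * c ^ n * u ^ n)) := by
    refine Integrable.indicator ?_ measurableSet_Ioi
    have := (int_pow_eta hη hηsupp n).const_mul (Atil * c ^ n)
    refine this.congr ?_
    filter_upwards with u
    ring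
  calc ∫ u : ℝ, η u * ψ (c * u + x₀)
      = ∫ u : ℝ, (η u * Pm.eval (c * u + x₀)
          + Set.indicator (Set.Ioi (0:ℝ)) (fun u => η u * (Atil * c ^ n * u ^ n)) u) := by
        exact integral_congr_ae (Filter.Eventually.of_forall hpt)
    _ = (∫ u : ℝ, η u * Pm.eval (c * u + x₀))
          + ∫ u : ℝ, Set.indicator (Set.Ioi (0:ℝ)) (fun u => η u * (Atil * c ^ n * u ^ n)) u :=
        integral_add hint1 hint2
    _ = 0 + ∫ u in Set.Ioi (0:ℝ), η u * (Atil * c ^ n * u ^ n) := by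
        rw [integral_indicator measurableSet_Ioi]
        congr 1
        have hdegc : (Pm.comp (C c * X + C x₀)).natDegree ≤ n + 2 := by
          refine (Polynomial.natDegree_comp_le).trans ?_
          have h1 : (C c * X + C x₀).natDegree ≤ 1 := by
            refine (Polynomial.natDegree_add_le _ _).trans (max_le ?_ (by simp))
            exact (Polynomial.natDegree_C_mul_le _ _).trans (by simp)
          calc Pm.natDegree * (C c * X + C x₀).natDegree ≤ n * 1 :=
                Nat.mul_le_mul (hdeg cm) h1
            _ ≤ n + 2 := by omega
        have := mom_poly hη hηsupp n hηmom (Pm.comp (C c * X + C x₀)) hdegc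
        rw [← this]
        refine integral_congr_ae (Filter.Eventually.of_forall fun u => ?_)
        simp [Polynomial.eval_comp]
    _ = Atil * c ^ n * ∫ u in Set.Ioi (0:ℝ), u ^ n * η u := by
        rw [zero_add, ← MeasureTheory.integral_const_mul]
        refine integral_congr_ae (Filter.Eventually.of_forall fun u => ?_)
        ring

lemma Abound (n : ℕ) (hn : 1 ≤ n) (ψ : ℝ → ℝ)
    (hsmooth : ContDiff ℝ (n - 1 : ℕ) ψ)
    (A : ℤ → ℝ)
    (hpoly : ∀ θ : ℤ, ∃ c : ℕ → ℝ, c n = A θ ∧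
      ∀ x ∈ Set.Icc ((θ : ℝ) / 2) (((θ : ℝ) + 1) / 2),
        ψ x = ∑ j ∈ Finset.range (n + 1), c j * x ^ j)
    (C0 γ : ℝ) (hC : 0 < C0) (hγ : 0 < γ)
    (hdecay : ∀ α : ℕ, α ≤ n - 1 → ∀ x : ℝ,
      |iteratedDeriv α ψ x| ≤ C0 * Real.exp (-γ * |x|)) :
    ∀ θ : ℤ, |A θ| ≤ 4 * C0 * Real.exp (γ/2) * Real.exp (-(γ/2) * |(θ:ℝ)|) := by
  intro θ
  obtain ⟨c, hcn, hc⟩ := hpoly θ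
  set a : ℝ := (θ:ℝ)/2 with ha
  set b : ℝ := ((θ:ℝ)+1)/2 with hb
  have hab : a < b := by rw [ha, hb]; linarith
  set P : ℝ[X] := ∑ j ∈ Finset.range (n+1), C (c j) * X ^ j with hP
  have hPeval : ∀ x ∈ Set.Icc a b, ψ x = P.eval x := by
    intro x hx
    rw [hP]
    simpa [eval_finset_sum] using hc x hx
  have hg := bridge (n-1) ψ hsmooth P a b hab hPeval (n-1) le_rfl
  set g : ℝ[X] := Polynomial.derivative^[n-1] P with hgdef
  set D : ℕ := n.descFactorial (n-1) with hD
  have hgeval : ∀ x : ℝ, g.eval x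
      = ∑ j ∈ Finset.range (n+1), c j * (j.descFactorial (n-1) : ℝ) * x ^ (j - (n-1)) := by
    intro x
    rw [hgdef, hP, Polynomial.iterate_derivative_sum]
    rw [Polynomial.eval_finset_sum]
    refine Finset.sum_congr rfl fun j _ => ?_
    rw [Polynomial.iterate_derivative_C_mul, Polynomial.iterate_derivative_X_pow_eq_C_mul]
    simp [mul_assoc]
  have hdiff : g.eval b - g.eval a = A θ * (D : ℝ) * (b - a) := by
    rw [hgeval, hgeval, ← Finset.sum_sub_distrib]
    rw [Finset.sum_eq_single n]
    · rw [hcn]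
      have h1 : n - (n-1) = 1 := by omega
      rw [h1, pow_one, pow_one, hD]
      ring
    · intro j hj hjn
      have : j - (n-1) = 0 ∨ j = n := by
        rw [Finset.mem_range] at hj; omega
      rcases this with h | h
      · rw [h, pow_zero, pow_zero, sub_self]
      · exact absurd h hjn
    · intro h
      exact absurd (Finset.mem_range_succ_iff.mpr le_rfl) h
  have hDpos : 1 ≤ (D : ℝ) := by
    have : D ≠ 0 := by
      rw [hD, Ne, Nat.descFactorial_eq_zero_iff_lt]
      omega
    exact_mod_cast Nat.one_le_iff_ne_zero.mpr this
  have hga : |g.eval a| ≤ C0 * Real.exp (-γ * |a|) := by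
    rw [← hg a (Set.left_mem_Icc.mpr hab.le)]
    exact hdecay (n-1) le_rfl a
  have hgb : |g.eval b| ≤ C0 * Real.exp (-γ * |b|) := by
    rw [← hg b (Set.right_mem_Icc.mpr hab.le)]
    exact hdecay (n-1) le_rfl b
  have hexpa : Real.exp (-γ * |a|) ≤ Real.exp (γ/2) * Real.exp (-(γ/2) * |(θ:ℝ)|) := by
    rw [← Real.exp_add]
    apply Real.exp_le_exp.mpr
    rw [ha, abs_div]
    have : |(2:ℝ)| = 2 := by norm_num
    rw [this]
    nlinarith [abs_nonneg ((θ:ℝ))]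
  have hexpb : Real.exp (-γ * |b|) ≤ Real.exp (γ/2) * Real.exp (-(γ/2) * |(θ:ℝ)|) := by
    rw [← Real.exp_add]
    apply Real.exp_le_exp.mpr
    rw [hb, abs_div]
    have h2 : |(2:ℝ)| = 2 := by norm_num
    rw [h2]
    have h3 : |(θ:ℝ)| - 1 ≤ |(θ:ℝ) + 1| := by
      have := abs_sub_abs_le_abs_sub ((θ:ℝ)) (-1)
      simp only [abs_neg, abs_one, sub_neg_eq_add] at this
      linarith
    nlinarith
  have hba : b - a = 1/2 := by rw [ha, hb]; ring
  have habs : |A θ| * (D:ℝ) * (1/2) ≤ |g.eval b| + |g.eval a| := by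
    calc |A θ| * (D:ℝ) * (1/2) = |A θ * (D:ℝ) * (b - a)| := by
          rw [hba, abs_mul, abs_mul]
          rw [abs_of_nonneg (by positivity : (0:ℝ) ≤ (D:ℝ)),
            abs_of_nonneg (by norm_num : (0:ℝ) ≤ (1/2:ℝ))]
      _ = |g.eval b - g.eval a| := by rw [hdiff]
      _ ≤ |g.eval b| + |g.eval a| := abs_sub _ _
  have hsum : |g.eval b| + |g.eval a|
      ≤ 2 * C0 * Real.exp (γ/2) * Real.exp (-(γ/2) * |(θ:ℝ)|) := by
    have h1 := hgb.trans (mul_le_mul_of_nonneg_left hexpb hC.le)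
    have h2 := hga.trans (mul_le_mul_of_nonneg_left hexpa hC.le)
    nlinarith
  have h4 : |A θ| * (1/2) ≤ |A θ| * (D:ℝ) * (1/2) := by
    nlinarith [abs_nonneg (A θ)]
  nlinarith

end Helpers
set_option maxHeartbeats 1000000 in
theorem stmt_9
    (n : ℕ) (hn : 1 ≤ n) (ψ : ℝ → ℝ)
    (hsmooth : ContDiff ℝ (n - 1 : ℕ) ψ)
    (A : ℤ → ℝ)
    (hpoly : ∀ θ : ℤ, ∃ c : ℕ → ℝ, c n = A θ ∧
      ∀ x ∈ Set.Icc ((θ : ℝ) / 2) (((θ : ℝ) + 1) / 2),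
        ψ x = ∑ j ∈ Finset.range (n + 1), c j * x ^ j)
    (C γ : ℝ) (hC : 0 < C) (hγ : 0 < γ)
    (hdecay : ∀ α : ℕ, α ≤ n - 1 → ∀ x : ℝ,
      |iteratedDeriv α ψ x| ≤ C * Real.exp (-γ * |x|))
    (hAtilde : A 1 - A 0 ≠ 0)
    (η : ℝ → ℝ) (hη : MeasureTheory.Integrable η)
    (hηsupp : ∀ y : ℝ, y ∉ Set.Ioo (-(2 : ℝ) ^ (-5 : ℤ)) ((2 : ℝ) ^ (-5 : ℤ)) → η y = 0)
    (hηmom : ∀ M : ℕ, M ≤ n + 2 → ∫ y : ℝ, y ^ M * η y = 0)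
    (hηodd : ∀ y : ℝ, (-y) ^ n * η (-y) = -(y ^ n * η y)) :
    ∃ K₀star : ℤ, 1 ≤ K₀star ∧
      ∀ K₀ : ℤ, K₀star ≤ K₀ →
      ∀ s q : ℝ, 1 < q →
      ∀ k N : ℕ, ∀ μ : ℕ, μ < 2 ^ k →
        |A 1 - A 0| / 2 * (2 : ℝ) ^ ((N : ℝ) * (-s + 1 / q - n - 1)) *
            |∫ y in (0 : ℝ)..(1 / 2), y ^ n * η y| ≤
          |(2 : ℝ) ^ k * ∫ y : ℝ,
              ((2 : ℝ) ^ ((N : ℝ) * (-s + 1 / q)) *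
                ∑ μ' ∈ Finset.range (2 ^ k),
                  η ((2 : ℝ) ^ (k + N) * (y - (2 : ℝ) ^ (-(k : ℤ)) * (K₀ : ℝ) * (μ' : ℝ) -
                      (2 : ℝ) ^ (-(k : ℤ) - 1)))) *
                ψ ((2 : ℝ) ^ k * y - (K₀ : ℝ) * (μ : ℝ))| ∧
          |(2 : ℝ) ^ k * ∫ y : ℝ,
              ((2 : ℝ) ^ ((N : ℝ) * (-s + 1 / q)) *
                ∑ μ' ∈ Finset.range (2 ^ k),
                  η ((2 : ℝ) ^ (k + N) * (y - (2 : ℝ) ^ (-(k : ℤ)) * (K₀ : ℝ) * (μ' : ℝ) -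
                      (2 : ℝ) ^ (-(k : ℤ) - 1)))) *
                ψ ((2 : ℝ) ^ k * y - (K₀ : ℝ) * (μ : ℝ))| ≤
          2 * |A 1 - A 0| * (2 : ℝ) ^ ((N : ℝ) * (-s + 1 / q - n - 1)) *
            |∫ y in (0 : ℝ)..(1 / 2), y ^ n * η y| := by
  have hψcont : Continuous ψ := hsmooth.continuous
  have hψbdd : ∀ x : ℝ, |ψ x| ≤ C := by
    intro x
    have h := hdecay 0 (Nat.zero_le _) x
    rw [iteratedDeriv_zero] at h
    have h2 : Real.exp (-γ * |x|) ≤ 1 := by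
      calc Real.exp (-γ * |x|) ≤ Real.exp 0 :=
            Real.exp_le_exp.mpr (by nlinarith [abs_nonneg x])
        _ = 1 := Real.exp_zero
    nlinarith [Real.exp_pos (-γ * |x|)]
  have hAb := Abound n hn ψ hsmooth A hpoly C γ hC hγ hdecay
  set B : ℝ := 8 * C * Real.exp γ with hBdef
  have hBpos : 0 < B := by positivity
  have hD : ∀ d : ℤ, |A (2*d+1) - A (2*d)| ≤ B * Real.exp (-γ * |(d:ℝ)|) := by
    intro d
    have h1 := hAb (2*d+1)
    have h2 := hAb (2*d)
    have e2 : |((2*d : ℤ):ℝ)| = 2 * |(d:ℝ)| := by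
      push_cast
      rw [abs_mul]
      norm_num
    have e1 : 2 * |(d:ℝ)| - 1 ≤ |((2*d+1 : ℤ):ℝ)| := by
      push_cast
      have := abs_sub_abs_le_abs_sub (2*(d:ℝ)) (-1)
      simp only [abs_neg, abs_one, sub_neg_eq_add] at this
      rw [abs_mul] at this
      norm_num at this
      linarith
    have hh1 : Real.exp (-(γ/2) * |((2*d+1:ℤ):ℝ)|)
        ≤ Real.exp (γ/2) * Real.exp (-γ * |(d:ℝ)|) := by
      rw [← Real.exp_add]
      apply Real.exp_le_exp.mpr
      nlinarith
    have hh2 : Real.exp (-(γ/2) * |((2*d:ℤ):ℝ)|) = Real.exp (-γ * |(d:ℝ)|) := by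
      congr 1
      rw [e2]
      ring
    have hexpmono : Real.exp (γ/2) ≤ Real.exp γ := Real.exp_le_exp.mpr (by linarith)
    have h1' := h1.trans (mul_le_mul_of_nonneg_left hh1 (by positivity))
    rw [hh2] at h2
    have hexp1 : (0:ℝ) < Real.exp (γ/2) := Real.exp_pos _
    have hexp2 : (0:ℝ) < Real.exp (-γ * |(d:ℝ)|) := Real.exp_pos _
    calc |A (2*d+1) - A (2*d)| ≤ |A (2*d+1)| + |A (2*d)| := abs_sub _ _
      _ ≤ 4 * C * Real.exp (γ/2) * (Real.exp (γ/2) * Real.exp (-γ * |(d:ℝ)|))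
          + 4 * C * Real.exp (γ/2) * Real.exp (-γ * |(d:ℝ)|) := add_le_add h1' h2
      _ ≤ B * Real.exp (-γ * |(d:ℝ)|) := by
          rw [hBdef]
          have hee : Real.exp (γ/2) * Real.exp (γ/2) = Real.exp γ := by
            rw [← Real.exp_add]; congr 1; ring
          have t1 : 4*C*Real.exp (γ/2) * (Real.exp (γ/2) * Real.exp (-γ * |(d:ℝ)|))
              = 4*C*Real.exp γ * Real.exp (-γ * |(d:ℝ)|) := by rw [← hee]; ring
          have t2 : 4*C*Real.exp (γ/2) * Real.exp (-γ * |(d:ℝ)|)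
              ≤ 4*C*Real.exp γ * Real.exp (-γ * |(d:ℝ)|) := by
            have h' := mul_le_mul_of_nonneg_left (mul_le_mul_of_nonneg_right hexpmono hexp2.le)
              (by positivity : (0:ℝ) ≤ 4*C)
            linarith [h']
          linarith [t1, t2]
  set ε : ℝ := |A 1 - A 0| with hεdef
  have hεpos : 0 < ε := abs_pos.mpr hAtilde
  set T0 : ℝ := min (1/2) (ε / (8*B)) with hT0def
  have hT0pos : 0 < T0 := lt_min (by norm_num) (by positivity)
  refine ⟨max 1 ⌈(-Real.log T0)/γ⌉, le_max_left _ _, ?_⟩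
  intro K₀ hK₀ s q hq k N μ hμ
  have hK₀1 : (1:ℤ) ≤ K₀ := le_trans (le_max_left _ _) hK₀
  have hK₀R : (0:ℝ) < (K₀:ℝ) := by exact_mod_cast lt_of_lt_of_le zero_lt_one hK₀1
  set r : ℝ := Real.exp (-(γ * (K₀:ℝ))) with hrdef
  have hr0 : 0 ≤ r := (Real.exp_pos _).le
  have hrT : r ≤ T0 := by
    have h2 : (⌈(-Real.log T0)/γ⌉ : ℝ) ≤ (K₀:ℝ) := by
      exact_mod_cast le_trans (le_max_right _ _) hK₀
    have h1 : (-Real.log T0)/γ ≤ (K₀ : ℝ) := le_trans (Int.le_ceil _) h2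
    have h3 : -(γ * (K₀:ℝ)) ≤ Real.log T0 := by
      rw [div_le_iff₀ hγ] at h1
      nlinarith
    calc r ≤ Real.exp (Real.log T0) := Real.exp_le_exp.mpr h3
      _ = T0 := Real.exp_log hT0pos
  have hrhalf : r ≤ 1/2 := le_trans hrT (min_le_left _ _)
  have hrε : r ≤ ε/(8*B) := le_trans hrT (min_le_right _ _)
  have hr1 : r < 1 := lt_of_le_of_lt hrhalf (by norm_num)
  -- the coefficient sequence
  set Sd : ℕ → ℝ := fun μ' => A (2*(K₀*((μ':ℤ)-(μ:ℤ)))+1) - A (2*(K₀*((μ':ℤ)-(μ:ℤ)))) with hSddef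
  set Stot : ℝ := ∑ μ' ∈ Finset.range (2^k), Sd μ' with hStotdef
  have hμmem : μ ∈ Finset.range (2^k) := Finset.mem_range.mpr hμ
  have hSd0 : Sd μ = A 1 - A 0 := by
    rw [hSddef]
    simp
  have hrest : |∑ μ' ∈ (Finset.range (2^k)).erase μ, Sd μ'| ≤ ε/2 := by
    have hb : ∀ μ' ∈ (Finset.range (2^k)).erase μ,
        |Sd μ'| ≤ B * r ^ ((((μ':ℤ) - (μ:ℤ))).natAbs) := by
      intro μ' hmem
      have hd := hD (K₀*((μ':ℤ)-(μ:ℤ)))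
      have hZ : |K₀*((μ':ℤ)-(μ:ℤ))| = K₀ * ((((μ':ℤ)-(μ:ℤ)).natAbs : ℤ)) := by
        rw [abs_mul, abs_of_pos (by omega : (0:ℤ) < K₀), Int.abs_eq_natAbs]
      have habs : |(((K₀*((μ':ℤ)-(μ:ℤ)) : ℤ)):ℝ)|
          = (K₀:ℝ) * ((((μ':ℤ) - (μ:ℤ))).natAbs : ℝ) := by
        rw [← Int.cast_abs, hZ]
        push_cast
        rw [Nat.cast_natAbs]
        push_cast
        ring
      have hexp : Real.exp (-γ * ((K₀:ℝ) * ((((μ':ℤ) - (μ:ℤ))).natAbs : ℝ)))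
          = r ^ ((((μ':ℤ) - (μ:ℤ))).natAbs) := by
        rw [hrdef, ← Real.exp_nat_mul]
        congr 1
        ring
      calc |Sd μ'| ≤ B * Real.exp (-γ * |(((K₀*((μ':ℤ)-(μ:ℤ)) : ℤ)):ℝ)|) := hd
        _ = B * r ^ ((((μ':ℤ) - (μ:ℤ))).natAbs) := by rw [habs, hexp]
    have h1 := erase_sum_aux hr0 hr1 B hBpos.le (2^k) μ hμ Sd hb
    refine h1.trans ?_
    have hinv : (1 - r)⁻¹ ≤ 2 := by
      rw [inv_le_comm₀ (by linarith) (by norm_num)]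
      linarith
    have h2 : r * (1 - r)⁻¹ ≤ 2 * r := by
      calc r * (1 - r)⁻¹ ≤ r * 2 := mul_le_mul_of_nonneg_left hinv hr0
        _ = 2 * r := by ring
    have h3 : B * (2 * (r * (1 - r)⁻¹)) ≤ B * (4 * r) := by
      apply mul_le_mul_of_nonneg_left _ hBpos.le
      linarith
    refine h3.trans ?_
    have h4 : B * (4 * r) ≤ B * (4 * (ε/(8*B))) := by
      apply mul_le_mul_of_nonneg_left _ hBpos.le
      linarith
    refine h4.trans (le_of_eq ?_)
    field_simp
    ring
  have hsplit : Stot = Sd μ + ∑ μ' ∈ (Finset.range (2^k)).erase μ, Sd μ' := by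
    rw [hStotdef, Finset.add_sum_erase _ Sd hμmem]
  have hSlow : ε/2 ≤ |Stot| := by
    rw [hsplit, hSd0]
    have htri : |A 1 - A 0| - |∑ μ' ∈ (Finset.range (2^k)).erase μ, Sd μ'|
        ≤ |A 1 - A 0 + ∑ μ' ∈ (Finset.range (2^k)).erase μ, Sd μ'| := by
      have := abs_add_le (A 1 - A 0 + ∑ μ' ∈ (Finset.range (2^k)).erase μ, Sd μ')
        (-(∑ μ' ∈ (Finset.range (2^k)).erase μ, Sd μ'))
      simp only [add_neg_cancel_right, abs_neg] at this
      linarith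
    rw [← hεdef] at htri
    linarith
  have hShigh : |Stot| ≤ 2*ε := by
    rw [hsplit, hSd0]
    have := abs_add_le (A 1 - A 0) (∑ μ' ∈ (Finset.range (2^k)).erase μ, Sd μ')
    rw [← hεdef] at this
    linarith
  -- integral computation
  set t : ℝ := (2:ℝ)^k with htdef
  set T : ℝ := (2:ℝ)^N with hTdef
  have ht0 : (0:ℝ) < t := by rw [htdef]; positivity
  have hT0' : (0:ℝ) < T := by rw [hTdef]; positivity
  set c : ℝ := T⁻¹ with hcdef
  have hc0 : 0 < c := by rw [hcdef]; positivity
  have hc1 : c ≤ 1 := by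
    rw [hcdef, hTdef]
    rw [inv_le_one_iff₀]
    right
    exact one_le_pow₀ (by norm_num)
  set J0 : ℝ := ∫ u in Set.Ioi (0:ℝ), u ^ n * η u with hJ0def
  have hJint : J0 = ∫ y in (0:ℝ)..(1/2), y ^ n * η y :=
    Jeq hη hηsupp n (int_pow_eta hη hηsupp n)
  set R : ℝ := (2:ℝ)^((N:ℝ)*(-s+1/q)) with hRdef
  have hRpos : 0 < R := Real.rpow_pos_of_pos (by norm_num) _
  have hzk : (2:ℝ)^(-(k:ℤ)) = t⁻¹ := by
    rw [htdef, zpow_neg, zpow_natCast]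
  have hzk1 : (2:ℝ)^(-(k:ℤ)-1) = t⁻¹ * 2⁻¹ := by
    rw [show (-(k:ℤ)-1) = (-(k:ℤ)) + (-1) by ring, zpow_add₀ (by norm_num : (2:ℝ) ≠ 0),
      hzk, zpow_neg, zpow_one]
  have hkN : (2:ℝ)^(k+N) = t*T := by
    rw [htdef, hTdef, pow_add]
  -- per-term computation
  have hterm : ∀ μ' : ℕ,
      (∫ y : ℝ, η ((2 : ℝ) ^ (k + N) * (y - (2 : ℝ) ^ (-(k : ℤ)) * (K₀ : ℝ) * (μ' : ℝ) -
          (2 : ℝ) ^ (-(k : ℤ) - 1))) * ψ ((2 : ℝ) ^ k * y - (K₀ : ℝ) * (μ : ℝ)))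
        = (t*T)⁻¹ * (Sd μ' * c^n * J0) := by
    intro μ'
    set m : ℤ := K₀*((μ':ℤ)-(μ:ℤ)) with hmdef
    set e : ℝ := -(T * ((K₀:ℝ) * (μ':ℝ))) - T/2 with hedef
    have h1 : ∀ y : ℝ, (2 : ℝ) ^ (k + N) * (y - (2 : ℝ) ^ (-(k : ℤ)) * (K₀ : ℝ) * (μ' : ℝ) -
        (2 : ℝ) ^ (-(k : ℤ) - 1)) = (t*T)*y + e := by
      intro y
      rw [hkN, hzk, hzk1, hedef]
      field_simp
      ring
    have h2 : ∀ y : ℝ, c * ((t*T)*y + e) + ((m:ℝ)+1/2)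
        = (2:ℝ)^k * y - (K₀:ℝ)*(μ:ℝ) := by
      intro y
      have hm : ((m:ℤ):ℝ) = (K₀:ℝ)*((μ':ℝ) - (μ:ℝ)) := by
        rw [hmdef]; push_cast; ring
      rw [hcdef, hm, hedef, ← htdef]
      field_simp
      ring
    have harg : ∀ y : ℝ,
        η ((2 : ℝ) ^ (k + N) * (y - (2 : ℝ) ^ (-(k : ℤ)) * (K₀ : ℝ) * (μ' : ℝ) -
          (2 : ℝ) ^ (-(k : ℤ) - 1))) * ψ ((2 : ℝ) ^ k * y - (K₀ : ℝ) * (μ : ℝ))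
        = (fun u => η u * ψ (c * u + ((m : ℝ) + 1/2))) ((t*T)*y + e) := by
      intro y
      simp only []
      rw [h1 y, h2 y]
    calc (∫ y : ℝ, η ((2 : ℝ) ^ (k + N) * (y - (2 : ℝ) ^ (-(k : ℤ)) * (K₀ : ℝ) * (μ' : ℝ) -
          (2 : ℝ) ^ (-(k : ℤ) - 1))) * ψ ((2 : ℝ) ^ k * y - (K₀ : ℝ) * (μ : ℝ)))
        = ∫ y : ℝ, (fun u => η u * ψ (c * u + ((m : ℝ) + 1/2))) ((t*T)*y + e) :=
          integral_congr_ae (Filter.Eventually.of_forall harg)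
      _ = (t*T)⁻¹ * ∫ u : ℝ, η u * ψ (c * u + ((m : ℝ) + 1/2)) :=
          subst_aux (fun u => η u * ψ (c * u + ((m : ℝ) + 1/2))) (t*T) e
            (by positivity)
      _ = (t*T)⁻¹ * (Sd μ' * c^n * J0) := by
          rw [core_identity n hn ψ hsmooth A hpoly η hη hηsupp hηmom m c hc0 hc1]
  -- integrability of each term
  have hintterm : ∀ μ' : ℕ, Integrable (fun y : ℝ =>
      η ((2 : ℝ) ^ (k + N) * (y - (2 : ℝ) ^ (-(k : ℤ)) * (K₀ : ℝ) * (μ' : ℝ) -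
          (2 : ℝ) ^ (-(k : ℤ) - 1))) * ψ ((2 : ℝ) ^ k * y - (K₀ : ℝ) * (μ : ℝ))) := by
    intro μ'
    set e : ℝ := -(T * ((K₀:ℝ) * (μ':ℝ))) - T/2 with hedef
    have h1 : ∀ y : ℝ, (2 : ℝ) ^ (k + N) * (y - (2 : ℝ) ^ (-(k : ℤ)) * (K₀ : ℝ) * (μ' : ℝ) -
        (2 : ℝ) ^ (-(k : ℤ) - 1)) = (t*T)*y + e := by
      intro y
      rw [hkN, hzk, hzk1, hedef]
      field_simp
      ring
    have hη1 : Integrable (fun y : ℝ => η ((t*T)*y + e)) :=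
      eta_affine_int hη (t*T) e (by positivity)
    have hη2 : Integrable (fun y : ℝ =>
        η ((2 : ℝ) ^ (k + N) * (y - (2 : ℝ) ^ (-(k : ℤ)) * (K₀ : ℝ) * (μ' : ℝ) -
          (2 : ℝ) ^ (-(k : ℤ) - 1)))) := by
      refine hη1.congr (Filter.Eventually.of_forall fun y => ?_)
      exact congrArg η (h1 y).symm
    have hψm : AEStronglyMeasurable (fun y : ℝ => ψ ((2:ℝ)^k * y - (K₀:ℝ)*(μ:ℝ))) volume := by
      have hc : Continuous (fun y : ℝ => (2:ℝ)^k * y - (K₀:ℝ)*(μ:ℝ)) :=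
        (continuous_const.mul continuous_id).sub continuous_const
      exact (hψcont.comp hc).aestronglyMeasurable
    have := hη2.bdd_mul hψm (Filter.Eventually.of_forall fun y => by
      rw [Real.norm_eq_abs]; exact hψbdd _)
    refine this.congr (Filter.Eventually.of_forall fun y => ?_)
    ring
  -- the full integral
  have hIrw : (∫ y : ℝ,
      ((2 : ℝ) ^ ((N : ℝ) * (-s + 1 / q)) *
        ∑ μ' ∈ Finset.range (2 ^ k),
          η ((2 : ℝ) ^ (k + N) * (y - (2 : ℝ) ^ (-(k : ℤ)) * (K₀ : ℝ) * (μ' : ℝ) -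
              (2 : ℝ) ^ (-(k : ℤ) - 1)))) *
        ψ ((2 : ℝ) ^ k * y - (K₀ : ℝ) * (μ : ℝ)))
      = R * ((t*T)⁻¹ * c^n * J0 * Stot) := by
    have hpt : ∀ y : ℝ,
        ((2 : ℝ) ^ ((N : ℝ) * (-s + 1 / q)) *
          ∑ μ' ∈ Finset.range (2 ^ k),
            η ((2 : ℝ) ^ (k + N) * (y - (2 : ℝ) ^ (-(k : ℤ)) * (K₀ : ℝ) * (μ' : ℝ) -
                (2 : ℝ) ^ (-(k : ℤ) - 1)))) *
          ψ ((2 : ℝ) ^ k * y - (K₀ : ℝ) * (μ : ℝ))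
        = ∑ μ' ∈ Finset.range (2 ^ k), R *
            (η ((2 : ℝ) ^ (k + N) * (y - (2 : ℝ) ^ (-(k : ℤ)) * (K₀ : ℝ) * (μ' : ℝ) -
                (2 : ℝ) ^ (-(k : ℤ) - 1))) * ψ ((2 : ℝ) ^ k * y - (K₀ : ℝ) * (μ : ℝ))) := by
      intro y
      rw [← hRdef, mul_assoc, Finset.sum_mul, Finset.mul_sum]
    calc (∫ y : ℝ,
        ((2 : ℝ) ^ ((N : ℝ) * (-s + 1 / q)) *
          ∑ μ' ∈ Finset.range (2 ^ k),
            η ((2 : ℝ) ^ (k + N) * (y - (2 : ℝ) ^ (-(k : ℤ)) * (K₀ : ℝ) * (μ' : ℝ) -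
                (2 : ℝ) ^ (-(k : ℤ) - 1)))) *
          ψ ((2 : ℝ) ^ k * y - (K₀ : ℝ) * (μ : ℝ)))
        = ∫ y : ℝ, ∑ μ' ∈ Finset.range (2 ^ k), R *
            (η ((2 : ℝ) ^ (k + N) * (y - (2 : ℝ) ^ (-(k : ℤ)) * (K₀ : ℝ) * (μ' : ℝ) -
                (2 : ℝ) ^ (-(k : ℤ) - 1))) * ψ ((2 : ℝ) ^ k * y - (K₀ : ℝ) * (μ : ℝ))) :=
          integral_congr_ae (Filter.Eventually.of_forall hpt)
      _ = ∑ μ' ∈ Finset.range (2 ^ k), ∫ y : ℝ, R *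
            (η ((2 : ℝ) ^ (k + N) * (y - (2 : ℝ) ^ (-(k : ℤ)) * (K₀ : ℝ) * (μ' : ℝ) -
                (2 : ℝ) ^ (-(k : ℤ) - 1))) * ψ ((2 : ℝ) ^ k * y - (K₀ : ℝ) * (μ : ℝ))) :=
          integral_finset_sum _ (fun μ' _ => (hintterm μ').const_mul R)
      _ = ∑ μ' ∈ Finset.range (2 ^ k), R * ((t*T)⁻¹ * (Sd μ' * c^n * J0)) := by
          refine Finset.sum_congr rfl fun μ' _ => ?_
          rw [MeasureTheory.integral_const_mul, hterm μ']
      _ = R * ((t*T)⁻¹ * c^n * J0 * Stot) := by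
          rw [← Finset.mul_sum]
          congr 1
          rw [hStotdef, Finset.mul_sum]
          refine Finset.sum_congr rfl fun μ' _ => ?_
          ring
  -- the power identity
  set P0 : ℝ := (2:ℝ)^((N:ℝ)*(-s+1/q-(n:ℝ)-1)) with hP0def
  have hP0pos : 0 < P0 := Real.rpow_pos_of_pos (by norm_num) _
  have hkey : R * (T⁻¹ * c^n) = P0 := by
    have ha : T⁻¹ * c^n = ((2:ℝ)^(N*(n+1)))⁻¹ := by
      rw [hcdef, hTdef, inv_pow, ← mul_inv, ← pow_succ', ← pow_mul]
    have hb : P0 = R * ((2:ℝ)^(N*(n+1)))⁻¹ := by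
      have h1 : (N:ℝ)*(-s+1/q-(n:ℝ)-1) = (N:ℝ)*(-s+1/q) + (-((N*(n+1):ℕ):ℝ)) := by
        push_cast
        ring
      rw [hP0def, h1, Real.rpow_add (by norm_num : (0:ℝ) < 2), hRdef]
      congr 1
      rw [Real.rpow_neg (by norm_num : (0:ℝ) ≤ 2), Real.rpow_natCast]
    rw [ha, hb]
  have hX : (2:ℝ)^k * (∫ y : ℝ,
      ((2 : ℝ) ^ ((N : ℝ) * (-s + 1 / q)) *
        ∑ μ' ∈ Finset.range (2 ^ k),
          η ((2 : ℝ) ^ (k + N) * (y - (2 : ℝ) ^ (-(k : ℤ)) * (K₀ : ℝ) * (μ' : ℝ) -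
              (2 : ℝ) ^ (-(k : ℤ) - 1)))) *
        ψ ((2 : ℝ) ^ k * y - (K₀ : ℝ) * (μ : ℝ)))
      = P0 * (J0 * Stot) := by
    rw [hIrw, ← htdef, ← hkey]
    field_simp
  have habsX : |(2:ℝ)^k * (∫ y : ℝ,
      ((2 : ℝ) ^ ((N : ℝ) * (-s + 1 / q)) *
        ∑ μ' ∈ Finset.range (2 ^ k),
          η ((2 : ℝ) ^ (k + N) * (y - (2 : ℝ) ^ (-(k : ℤ)) * (K₀ : ℝ) * (μ' : ℝ) -
              (2 : ℝ) ^ (-(k : ℤ) - 1)))) *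
        ψ ((2 : ℝ) ^ k * y - (K₀ : ℝ) * (μ : ℝ)))|
      = P0 * (|∫ y in (0 : ℝ)..(1 / 2), y ^ n * η y| * |Stot|) := by
    rw [hX, abs_mul, abs_mul, abs_of_pos hP0pos, ← hJint]
  have hJabs0 : (0:ℝ) ≤ |∫ y in (0 : ℝ)..(1 / 2), y ^ n * η y| :=
    abs_nonneg _
  have hlow : ε/2 * P0 * |∫ y in (0 : ℝ)..(1 / 2), y ^ n * η y|
      ≤ P0 * (|∫ y in (0 : ℝ)..(1 / 2), y ^ n * η y| * |Stot|) := by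
    have h2 := mul_le_mul_of_nonneg_left hSlow hJabs0
    have h3 := mul_le_mul_of_nonneg_left h2 hP0pos.le
    calc ε/2 * P0 * |∫ y in (0 : ℝ)..(1 / 2), y ^ n * η y|
        = P0 * (|∫ y in (0 : ℝ)..(1 / 2), y ^ n * η y| * (ε/2)) := by ring
      _ ≤ _ := h3
  have hhigh : P0 * (|∫ y in (0 : ℝ)..(1 / 2), y ^ n * η y| * |Stot|)
      ≤ 2 * ε * P0 * |∫ y in (0 : ℝ)..(1 / 2), y ^ n * η y| := by
    have h2 := mul_le_mul_of_nonneg_left hShigh hJabs0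
    have h3 := mul_le_mul_of_nonneg_left h2 hP0pos.le
    calc P0 * (|∫ y in (0 : ℝ)..(1 / 2), y ^ n * η y| * |Stot|)
        ≤ P0 * (|∫ y in (0 : ℝ)..(1 / 2), y ^ n * η y| * (2*ε)) := h3
      _ = 2 * ε * P0 * |∫ y in (0 : ℝ)..(1 / 2), y ^ n * η y| := by ring
  constructor
  · exact hlow.trans_eq habsX.symm
  · exact le_of_eq_of_le habsX hhigh
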